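/- For every configuration σ ∈ S and every robust configuration η ∈ U, the limit p̂(σ, η) := lim_{κ→∞} p̃^κ(σ, η) exists. Moreover, if η ∈ U(σ) and η ≠ σ, then p̂(σ, η) = Σ_{ω∈Ω(σ,η)} Π_{ℓ=0}^{|ω|−1} 1/|Δ(ω_ℓ)|, where ω_ℓ denotes the ℓ-th configuration of the downhill path ω and |ω| its length (the sum is finite since downhill paths have bounded length, and each |Δ(ω_ℓ)| ≥ 1 for ℓ < |ω|). -/

import Mathlib

open Filter Topology

namespace IsingS

open scoped Classical

variable (N : ℕ) [NeZero N]

/-- Vertex set: the N×N discrete torus. -/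
abbrev V := ZMod N × ZMod N

/-- Configurations: `true` encodes spin +1, `false` encodes spin -1. -/
abbrev Cfg := V N → Bool

/-- The spin value in ℤ of a Boolean spin. -/
def spin (b : Bool) : ℤ := if b then 1 else -1

/-- The four nearest neighbors of a vertex. -/
def nbrFinset (i : V N) : Finset (V N) :=
  {i + ((1 : ZMod N), (0 : ZMod N)), i + ((-1 : ZMod N), (0 : ZMod N)),
   i + ((0 : ZMod N), (1 : ZMod N)), i + ((0 : ZMod N), (-1 : ZMod N))}

/-- The Hamiltonian with external magnetic field `h`. -/
noncomputable def H (h : ℝ) (σ : Cfg N) : ℝ :=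
  -(1/2) * (((∑ i : V N, ∑ j ∈ nbrFinset N i, spin (σ i) * spin (σ j)) : ℤ) : ℝ)
    - h * (((∑ i : V N, spin (σ i)) : ℤ) : ℝ)

/-- Flip the spin at vertex `i`. -/
def flip (σ : Cfg N) (i : V N) : Cfg N := Function.update σ i (!σ i)

/-- Spin `i` is susceptible in `σ` if flipping it does not increase the energy. -/
def susceptible (h : ℝ) (σ : Cfg N) (i : V N) : Prop :=
  H N h (flip N σ i) ≤ H N h σ

/-- A configuration is robust if it has no susceptible spins. -/
def robust (h : ℝ) (σ : Cfg N) : Prop := ∀ i : V N, ¬ susceptible N h σ i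

/-- The set of robust configurations. -/
noncomputable def Uset (h : ℝ) : Finset (Cfg N) :=
  Finset.univ.filter (fun σ => robust N h σ)

/-- Metropolis rate of flipping spin `i` from `σ` at inverse temperature `β`. -/
noncomputable def metroRate (h β : ℝ) (σ : Cfg N) (i : V N) : ℝ :=
  (1 / (N : ℝ) ^ 2) * min 1 (Real.exp (-β * (H N h (flip N σ i) - H N h σ)))

/-- The Metropolis transition matrix at inverse temperature `β`. -/
noncomputable def pβ (h β : ℝ) (σ η : Cfg N) : ℝ :=
  if η = σ then 1 - ∑ i : V N, metroRate N h β σ i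
  else ∑ i ∈ Finset.univ.filter (fun i => flip N σ i = η), metroRate N h β σ i

/-- The low-temperature dynamics `p̃ = lim_{β→∞} p_β`. -/
noncomputable def ptilde (h : ℝ) (σ η : Cfg N) : ℝ :=
  limUnder atTop (fun β : ℝ => pβ N h β σ η)

/-- The low-temperature dynamics as a matrix. -/
noncomputable def Pmat (h : ℝ) : Matrix (Cfg N) (Cfg N) ℝ :=
  fun σ η => ptilde N h σ η

/-- The set of susceptible spins of `σ`. -/
noncomputable def deltaSet (h : ℝ) (σ : Cfg N) : Finset (V N) :=
  Finset.univ.filter (fun i => susceptible N h σ i)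

/-- One downhill step: a single spin flip that does not increase the energy. -/
def stepRel (h : ℝ) (σ η : Cfg N) : Prop :=
  (∃ i : V N, η = flip N σ i) ∧ H N h η ≤ H N h σ

/-- `l` is a downhill path from `σ` to `η` (encoded as the list of its
configurations `[σ_0, …, σ_ℓ]`). -/
def IsPathBetween (h : ℝ) (σ η : Cfg N) (l : List (Cfg N)) : Prop :=
  l.head? = some σ ∧ l.getLast? = some η ∧ l.Chain' (stepRel N h)

/-- The weight `Π_{ℓ=0}^{|ω|-1} 1/|Δ(ω_ℓ)|` of a downhill path. -/
noncomputable def pathWeight (h : ℝ) (l : List (Cfg N)) : ℝ :=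
  (l.dropLast.map (fun τ => ((deltaSet N h τ).card : ℝ)⁻¹)).prod

-- basic lemmas
lemma spin_not (b : Bool) : spin (!b) = - spin b := by cases b <;> simp [spin]

lemma spin_sq (b : Bool) : spin b * spin b = 1 := by cases b <;> simp [spin]

lemma flip_apply_self (σ : Cfg N) (i : V N) : flip N σ i i = !σ i := by
  simp [flip]

lemma flip_apply_ne (σ : Cfg N) {i j : V N} (hj : j ≠ i) : flip N σ i j = σ j := by
  simp [flip, Function.update_of_ne hj]

lemma flip_ne (σ : Cfg N) (i : V N) : flip N σ i ≠ σ := by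
  intro hc
  have := congrFun hc i
  rw [flip_apply_self] at this
  cases σ i <;> simp_all

lemma flip_right_inj (σ : Cfg N) {i j : V N} (hc : flip N σ i = flip N σ j) : i = j := by
  by_contra hij
  have h1 := congrFun hc i
  rw [flip_apply_self, flip_apply_ne N σ hij] at h1
  cases σ i <;> simp_all

lemma one_ne_zero' (hN : 3 ≤ N) : (1 : ZMod N) ≠ 0 := by
  haveI : Fact (1 < N) := ⟨by omega⟩
  exact one_ne_zero

lemma not_mem_nbr_self (hN : 3 ≤ N) (i : V N) : i ∉ nbrFinset N i := by
  have h1 : (1 : ZMod N) ≠ 0 := one_ne_zero' N hN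
  have h2 : (-1 : ZMod N) ≠ 0 := neg_ne_zero.mpr h1
  simp only [nbrFinset, Finset.mem_insert, Finset.mem_singleton, left_eq_add,
    Prod.ext_iff, Prod.fst_zero, Prod.snd_zero]
  simp_all

lemma mem_nbr_symm (i j : V N) : j ∈ nbrFinset N i ↔ i ∈ nbrFinset N j := by
  have key : ∀ (a b : V N) (x : ZMod N × ZMod N), a = b + x ↔ b = a + (-x) := by
    intro a b x
    constructor <;> intro hh <;> subst hh <;> ring
  simp only [nbrFinset, Finset.mem_insert, Finset.mem_singleton]
  rw [key j i, key j i, key j i, key j i]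
  simp only [Prod.neg_mk, neg_neg, neg_zero]
  tauto

set_option linter.unusedSectionVars false

lemma H_flip_sub (hN : 3 ≤ N) (h : ℝ) (σ : Cfg N) (i : V N) :
    H N h (flip N σ i) - H N h σ =
      2 * (spin (σ i) : ℝ) * (((∑ j ∈ nbrFinset N i, spin (σ j) : ℤ) : ℝ) + h) := by
  classical
  set s : V N → ℤ := fun j => spin (σ j) with hs
  set s' : V N → ℤ := fun j => spin (flip N σ i j) with hs'
  have hsi : s' i = - s i := by simp [hs', hs, flip_apply_self, spin_not]
  have hsne : ∀ j ≠ i, s' j = s j := fun j hj => by simp [hs', hs, flip_apply_ne N σ hj]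
  have hM : (∑ j : V N, s' j) - (∑ j : V N, s j) = -2 * s i := by
    rw [← Finset.sum_sub_distrib, Finset.sum_eq_single i]
    · rw [hsi]; ring
    · intro b _ hb; rw [hsne b hb]; ring
    · intro hb; exact absurd (Finset.mem_univ i) hb
  have hT : (∑ k : V N, ∑ j ∈ nbrFinset N k, s' k * s' j)
      - (∑ k : V N, ∑ j ∈ nbrFinset N k, s k * s j)
      = -4 * s i * (∑ j ∈ nbrFinset N i, s j) := by
    rw [← Finset.sum_sub_distrib]
    calc ∑ k : V N, ((∑ j ∈ nbrFinset N k, s' k * s' j) - ∑ j ∈ nbrFinset N k, s k * s j)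
        = ∑ k : V N, ((if k = i then -2 * s i * (∑ j ∈ nbrFinset N i, s j) else 0)
            + (if k ∈ nbrFinset N i then -2 * s i * s k else 0)) := by
          refine Finset.sum_congr rfl fun k _ => ?_
          rw [← Finset.sum_sub_distrib]
          by_cases hk : k = i
          · simp only [hk]
            rw [if_pos trivial, if_neg (not_mem_nbr_self N hN i), add_zero, Finset.mul_sum]
            refine Finset.sum_congr rfl fun j hj => ?_
            have hji : j ≠ i := fun e => (not_mem_nbr_self N hN i) (e ▸ hj)
            rw [hsi, hsne j hji]; ring
          · rw [if_neg hk, zero_add]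
            have hterm : ∀ j ∈ nbrFinset N k,
                s' k * s' j - s k * s j = if j = i then -2 * s i * s k else 0 := by
              intro j hj
              by_cases hji : j = i
              · subst hji; rw [if_pos rfl, hsne k hk, hsi]; ring
              · rw [if_neg hji, hsne k hk, hsne j hji]; ring
            rw [Finset.sum_congr rfl hterm, Finset.sum_ite_eq' (nbrFinset N k) i
              (fun _ => -2 * s i * s k)]
            simp only [mem_nbr_symm N k i]
      _ = -4 * s i * (∑ j ∈ nbrFinset N i, s j) := by
          rw [Finset.sum_add_distrib, Finset.sum_ite_eq' Finset.univ i, if_pos (Finset.mem_univ i),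
            Finset.sum_ite_mem, Finset.univ_inter, Finset.mul_sum]
          rw [← Finset.sum_add_distrib, Finset.mul_sum]
          exact Finset.sum_congr rfl fun j _ => by ring
  have hkey : H N h (flip N σ i) - H N h σ
      = -(1/2) * ((((∑ k : V N, ∑ j ∈ nbrFinset N k, s' k * s' j)
            - ∑ k : V N, ∑ j ∈ nbrFinset N k, s k * s j : ℤ)) : ℝ)
        - h * ((((∑ j : V N, s' j) - ∑ j : V N, s j : ℤ)) : ℝ) := by
    simp only [H, hs, hs']; push_cast; ring
  rw [hkey, hT, hM]; push_cast; ring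



section Ptilde

variable (h : ℝ)

lemma metroRate_of_susceptible {β : ℝ} (hb : 0 ≤ β) (σ : Cfg N) (i : V N)
    (hsus : susceptible N h σ i) : metroRate N h β σ i = 1 / (N:ℝ)^2 := by
  unfold metroRate
  have hle : H N h (flip N σ i) - H N h σ ≤ 0 := by
    have := hsus; unfold susceptible at this; linarith
  have : (1:ℝ) ≤ Real.exp (-β * (H N h (flip N σ i) - H N h σ)) :=
    Real.one_le_exp (by nlinarith)
  rw [min_eq_left this, mul_one]

lemma metroRate_tendsto_zero (σ : Cfg N) (i : V N) (hns : ¬ susceptible N h σ i) :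
    Tendsto (fun β : ℝ => metroRate N h β σ i) atTop (𝓝 0) := by
  have hpos : 0 < H N h (flip N σ i) - H N h σ := by
    unfold susceptible at hns; linarith [not_le.mp hns]
  set c := H N h (flip N σ i) - H N h σ
  have h1 : Tendsto (fun β : ℝ => -β * c) atTop atBot := by
    have h1 := (Filter.tendsto_id (α := ℝ)).atTop_mul_const hpos
    have heq : (fun β : ℝ => -β * c) = fun β : ℝ => -(β * c) := by funext β; ring
    rw [heq]
    exact Filter.tendsto_neg_atBot_iff.mpr h1
  have h2 : Tendsto (fun β : ℝ => Real.exp (-β * c)) atTop (𝓝 0) :=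
    Real.tendsto_exp_atBot.comp h1
  have h3 : Tendsto (fun β : ℝ => min 1 (Real.exp (-β * c))) atTop (𝓝 0) :=
    squeeze_zero (fun t => le_min one_pos.le (Real.exp_nonneg _))
      (fun t => min_le_right _ _) h2
  have h4 := h3.const_mul (1 / (N:ℝ)^2)
  rw [mul_zero] at h4
  exact h4

lemma tendsto_metroRate (σ : Cfg N) (i : V N) :
    Tendsto (fun β : ℝ => metroRate N h β σ i) atTop
      (𝓝 (if susceptible N h σ i then 1 / (N:ℝ)^2 else 0)) := by
  by_cases hsus : susceptible N h σ i
  · rw [if_pos hsus]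
    refine Tendsto.congr' ?_ tendsto_const_nhds
    filter_upwards [eventually_ge_atTop (0:ℝ)] with β hb
    exact (metroRate_of_susceptible N h hb σ i hsus).symm
  · rw [if_neg hsus]; exact metroRate_tendsto_zero N h σ i hsus

lemma tendsto_pβ_self (σ : Cfg N) :
    Tendsto (fun β : ℝ => pβ N h β σ σ) atTop
      (𝓝 (1 - ((deltaSet N h σ).card : ℝ) / (N:ℝ)^2)) := by
  have hsum : Tendsto (fun β : ℝ => ∑ i : V N, metroRate N h β σ i) atTop
      (𝓝 (∑ i : V N, if susceptible N h σ i then 1 / (N:ℝ)^2 else 0)) :=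
    tendsto_finset_sum _ (fun i _ => tendsto_metroRate N h σ i)
  have hval : (∑ i : V N, if susceptible N h σ i then 1 / (N:ℝ)^2 else 0)
      = ((deltaSet N h σ).card : ℝ) / (N:ℝ)^2 := by
    rw [← Finset.sum_filter]
    rw [Finset.sum_const, nsmul_eq_mul]
    unfold deltaSet
    ring
  rw [← hval]
  have : ∀ β : ℝ, pβ N h β σ σ = 1 - ∑ i : V N, metroRate N h β σ i := by
    intro β; unfold pβ; rw [if_pos rfl]
  simp only [this]
  exact hsum.const_sub 1

lemma filter_flip_eq (σ : Cfg N) (i : V N) :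
    Finset.univ.filter (fun j => flip N σ j = flip N σ i) = {i} := by
  ext j
  simp only [Finset.mem_filter, Finset.mem_univ, true_and, Finset.mem_singleton]
  exact ⟨fun hc => flip_right_inj N σ hc, fun hc => by rw [hc]⟩

lemma ptilde_self (σ : Cfg N) :
    ptilde N h σ σ = 1 - ((deltaSet N h σ).card : ℝ) / (N:ℝ)^2 :=
  (tendsto_pβ_self N h σ).limUnder_eq

lemma ptilde_flip (σ : Cfg N) (i : V N) :
    ptilde N h σ (flip N σ i) = if susceptible N h σ i then 1 / (N:ℝ)^2 else 0 := by
  have hne : flip N σ i ≠ σ := flip_ne N σ i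
  have heq : ∀ β : ℝ, pβ N h β σ (flip N σ i) = metroRate N h β σ i := by
    intro β; unfold pβ
    rw [if_neg hne, filter_flip_eq, Finset.sum_singleton]
  have : Tendsto (fun β : ℝ => pβ N h β σ (flip N σ i)) atTop
      (𝓝 (if susceptible N h σ i then 1 / (N:ℝ)^2 else 0)) := by
    simp only [heq]; exact tendsto_metroRate N h σ i
  exact this.limUnder_eq

lemma ptilde_other {σ η : Cfg N} (hne : η ≠ σ) (hnf : ∀ i, flip N σ i ≠ η) :
    ptilde N h σ η = 0 := by
  have heq : ∀ β : ℝ, pβ N h β σ η = 0 := by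
    intro β; unfold pβ
    rw [if_neg hne]
    have : Finset.univ.filter (fun j => flip N σ j = η) = ∅ := by
      ext j; simp [hnf j]
    rw [this, Finset.sum_empty]
  have : Tendsto (fun β : ℝ => pβ N h β σ η) atTop (𝓝 0) := by
    simp only [heq]; exact tendsto_const_nhds
  exact this.limUnder_eq

lemma card_V : Fintype.card (V N) = N^2 := by
  rw [Fintype.card_prod, ZMod.card, sq]

lemma deltaSet_card_le (σ : Cfg N) : ((deltaSet N h σ).card : ℝ) ≤ (N:ℝ)^2 := by
  have := Finset.card_le_univ (deltaSet N h σ)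
  rw [card_V] at this
  exact_mod_cast this

lemma Npow_pos : (0:ℝ) < (N:ℝ)^2 := by
  have : (0:ℝ) < (N:ℝ) := by
    have := NeZero.pos N
    exact_mod_cast this
  positivity

lemma ptilde_nonneg (σ η : Cfg N) : 0 ≤ ptilde N h σ η := by
  by_cases hη : η = σ
  · subst hη
    rw [ptilde_self]
    have h1 := deltaSet_card_le N h η
    have h2 := Npow_pos N
    rw [sub_nonneg, div_le_one h2]
    exact h1
  · by_cases hf : ∃ i, flip N σ i = η
    · obtain ⟨i, rfl⟩ := hf
      rw [ptilde_flip]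
      have h2 := Npow_pos N
      split <;> positivity
    · push_neg at hf
      rw [ptilde_other N h hη hf]

lemma ptilde_rowsum (σ : Cfg N) : ∑ η : Cfg N, ptilde N h σ η = 1 := by
  classical
  have h2 := Npow_pos N
  rw [← Finset.add_sum_erase Finset.univ _ (Finset.mem_univ σ)]
  have himg : (deltaSet N h σ).image (flip N σ) ⊆ Finset.univ.erase σ := by
    intro η hη
    obtain ⟨i, _, rfl⟩ := Finset.mem_image.mp hη
    exact Finset.mem_erase.mpr ⟨flip_ne N σ i, Finset.mem_univ _⟩
  have hrest : ∑ η ∈ Finset.univ.erase σ, ptilde N h σ η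
      = ∑ η ∈ (deltaSet N h σ).image (flip N σ), ptilde N h σ η := by
    refine (Finset.sum_subset himg ?_).symm
    intro η hη hnm
    have hne : η ≠ σ := (Finset.mem_erase.mp hη).1
    by_cases hf : ∃ i, flip N σ i = η
    · obtain ⟨i, rfl⟩ := hf
      rw [ptilde_flip]
      rw [if_neg]
      intro hsus
      exact hnm (Finset.mem_image.mpr ⟨i, by simp [deltaSet, hsus], rfl⟩)
    · push_neg at hf
      exact ptilde_other N h hne hf
  rw [hrest, Finset.sum_image (fun x _ y _ hc => flip_right_inj N σ hc)]
  have hterm : ∀ i ∈ deltaSet N h σ, ptilde N h σ (flip N σ i) = 1 / (N:ℝ)^2 := by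
    intro i hi
    rw [ptilde_flip, if_pos]
    exact (Finset.mem_filter.mp hi).2
  rw [Finset.sum_congr rfl hterm, Finset.sum_const, nsmul_eq_mul, ptilde_self]
  field_simp
  ring

lemma deltaSet_empty_of_robust {σ : Cfg N} (hrob : robust N h σ) : deltaSet N h σ = ∅ := by
  unfold deltaSet
  rw [Finset.filter_eq_empty_iff]
  exact fun {i} _ => hrob i

lemma ptilde_of_robust {σ : Cfg N} (hrob : robust N h σ) (τ : Cfg N) :
    ptilde N h σ τ = if τ = σ then 1 else 0 := by
  by_cases hτ : τ = σ
  · subst hτ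
    rw [if_pos rfl, ptilde_self, deltaSet_empty_of_robust N h hrob]
    simp
  · rw [if_neg hτ]
    by_cases hf : ∃ i, flip N σ i = τ
    · obtain ⟨i, rfl⟩ := hf
      rw [ptilde_flip, if_neg (hrob i)]
    · push_neg at hf
      exact ptilde_other N h hτ hf

end Ptilde



section Power

variable (h : ℝ)

lemma Pmat_rowsum (σ : Cfg N) : ∑ τ : Cfg N, Pmat N h σ τ = 1 :=
  ptilde_rowsum N h σ

lemma pow_entry_nonneg (κ : ℕ) (σ τ : Cfg N) : 0 ≤ (Pmat N h ^ κ) σ τ := by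
  induction κ generalizing σ τ with
  | zero =>
    rw [pow_zero, Matrix.one_apply]
    split <;> norm_num
  | succ κ ih =>
    rw [pow_succ, Matrix.mul_apply]
    exact Finset.sum_nonneg fun ρ _ => mul_nonneg (ih σ ρ) (ptilde_nonneg N h ρ τ)

lemma pow_rowsum (κ : ℕ) (σ : Cfg N) : ∑ τ : Cfg N, (Pmat N h ^ κ) σ τ = 1 := by
  induction κ generalizing σ with
  | zero =>
    simp [Matrix.one_apply]
  | succ κ ih =>
    simp only [pow_succ, Matrix.mul_apply]
    rw [Finset.sum_comm]
    have : ∀ ρ : Cfg N, ∑ τ : Cfg N, (Pmat N h ^ κ) σ ρ * Pmat N h ρ τ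
        = (Pmat N h ^ κ) σ ρ := by
      intro ρ
      rw [← Finset.mul_sum, Pmat_rowsum N h ρ, mul_one]
    rw [Finset.sum_congr rfl fun ρ _ => this ρ]
    exact ih σ

lemma pow_entry_le_one (κ : ℕ) (σ τ : Cfg N) : (Pmat N h ^ κ) σ τ ≤ 1 := by
  have h1 := pow_rowsum N h κ σ
  have h2 : (Pmat N h ^ κ) σ τ ≤ ∑ ρ : Cfg N, (Pmat N h ^ κ) σ ρ :=
    Finset.single_le_sum (fun ρ _ => pow_entry_nonneg N h κ σ ρ) (Finset.mem_univ τ)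
  linarith

lemma pow_mono {η : Cfg N} (hrob : robust N h η) (σ : Cfg N) :
    Monotone (fun κ : ℕ => (Pmat N h ^ κ) σ η) := by
  apply monotone_nat_of_le_succ
  intro κ
  have hdiag : Pmat N h η η = 1 := by
    show ptilde N h η η = 1
    rw [ptilde_of_robust N h hrob, if_pos rfl]
  calc (Pmat N h ^ κ) σ η = (Pmat N h ^ κ) σ η * Pmat N h η η := by rw [hdiag, mul_one]
    _ ≤ ∑ ρ : Cfg N, (Pmat N h ^ κ) σ ρ * Pmat N h ρ η := by
        exact Finset.single_le_sum
          (f := fun ρ => (Pmat N h ^ κ) σ ρ * Pmat N h ρ η)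
          (fun ρ _ => mul_nonneg (pow_entry_nonneg N h κ σ ρ) (ptilde_nonneg N h ρ η))
          (Finset.mem_univ η)
    _ = (Pmat N h ^ (κ+1)) σ η := by rw [pow_succ, Matrix.mul_apply]

lemma pow_robust_row {σ : Cfg N} (hrob : robust N h σ) (κ : ℕ) (τ : Cfg N) :
    (Pmat N h ^ κ) σ τ = if τ = σ then 1 else 0 := by
  induction κ generalizing τ with
  | zero =>
    rw [pow_zero, Matrix.one_apply]
    by_cases hc : τ = σ
    · rw [if_pos hc, if_pos hc.symm]
    · rw [if_neg hc, if_neg (fun hh => hc hh.symm)]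
  | succ κ ih =>
    rw [pow_succ', Matrix.mul_apply]
    have hrow : ∀ ρ : Cfg N, Pmat N h σ ρ * (Pmat N h ^ κ) ρ τ
        = if ρ = σ then (Pmat N h ^ κ) ρ τ else 0 := by
      intro ρ
      have hp : Pmat N h σ ρ = if ρ = σ then 1 else 0 := ptilde_of_robust N h hrob ρ
      rw [hp]
      by_cases hc : ρ = σ
      · rw [if_pos hc, if_pos hc, one_mul]
      · rw [if_neg hc, if_neg hc, zero_mul]
    rw [Finset.sum_congr rfl fun ρ _ => hrow ρ,
      Finset.sum_ite_eq' Finset.univ σ (fun ρ => (Pmat N h ^ κ) ρ τ),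
      if_pos (Finset.mem_univ σ), ih τ]

end Power



section Paths

variable (h : ℝ)

lemma susceptible_lt (hN : 3 ≤ N) (hh0 : 0 < h) (hh1 : h < 1) {σ : Cfg N} {i : V N}
    (hsus : susceptible N h σ i) : H N h (flip N σ i) < H N h σ := by
  refine lt_of_le_of_ne hsus ?_
  intro hc
  have hd := H_flip_sub N hN h σ i
  rw [hc, sub_self] at hd
  have hspin : (spin (σ i) : ℝ) ≠ 0 := by cases hb : σ i <;> simp [spin, hb]
  set S : ℤ := ∑ j ∈ nbrFinset N i, spin (σ j) with hS
  have h2 : ((S : ℝ) + h) = 0 := by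
    rcases mul_eq_zero.mp hd.symm with h' | h'
    · rcases mul_eq_zero.mp h' with h'' | h''
      · norm_num at h''
      · exact absurd h'' hspin
    · exact h'
  have h3 : -1 < (S:ℝ) := by linarith
  have h4 : (S:ℝ) < 0 := by linarith
  have h3' : -1 < S := by exact_mod_cast h3
  have h4' : S < 0 := by exact_mod_cast h4
  omega

lemma stepRel_lt (hN : 3 ≤ N) (hh0 : 0 < h) (hh1 : h < 1) {σ τ : Cfg N}
    (hst : stepRel N h σ τ) : H N h τ < H N h σ := by
  obtain ⟨⟨i, rfl⟩, hle⟩ := hst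
  exact susceptible_lt N h hN hh0 hh1 hle

lemma path_finite (hN : 3 ≤ N) (hh0 : 0 < h) (hh1 : h < 1) (σ η : Cfg N) :
    {l : List (Cfg N) | IsPathBetween N h σ η l}.Finite := by
  apply Set.Finite.subset (List.finite_length_le (Cfg N) (Fintype.card (Cfg N)))
  intro l hl
  obtain ⟨-, -, hchain⟩ := hl
  have hchain2 : l.Chain' (fun a b => H N h b < H N h a) :=
    hchain.imp (fun a b hab => stepRel_lt N h hN hh0 hh1 hab)
  haveI : IsTrans (Cfg N) (fun a b => H N h b < H N h a) :=
    ⟨fun _ _ _ hab hbc => lt_trans hbc hab⟩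
  have hpw := List.isChain_iff_pairwise.mp hchain2
  have hnd : l.Nodup := hpw.imp (fun {a b} hab => fun he => absurd hab (he ▸ lt_irrefl _))
  exact hnd.length_le_card

/-- The finite set of downhill paths from `σ` to `η`. -/
noncomputable def pathFinset (hN : 3 ≤ N) (hh0 : 0 < h) (hh1 : h < 1) (σ η : Cfg N) :
    Finset (List (Cfg N)) :=
  (path_finite N h hN hh0 hh1 σ η).toFinset

lemma mem_pathFinset (hN : 3 ≤ N) (hh0 : 0 < h) (hh1 : h < 1) {σ η : Cfg N}
    {l : List (Cfg N)} : l ∈ pathFinset N h hN hh0 hh1 σ η ↔ IsPathBetween N h σ η l :=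
  Set.Finite.mem_toFinset _

lemma Wsum_eq (hN : 3 ≤ N) (hh0 : 0 < h) (hh1 : h < 1) (σ η : Cfg N) :
    (∑' l : {l : List (Cfg N) // IsPathBetween N h σ η l}, pathWeight N h l.1)
      = ∑ l ∈ pathFinset N h hN hh0 hh1 σ η, pathWeight N h l := by
  have h1 : (∑' l : {l : List (Cfg N) // IsPathBetween N h σ η l}, pathWeight N h l.1)
      = ∑' (x : ↑{l : List (Cfg N) | IsPathBetween N h σ η l}), pathWeight N h ↑x := rfl
  rw [h1, tsum_subtype {l : List (Cfg N) | IsPathBetween N h σ η l} (pathWeight N h)]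
  have h2 := tsum_eq_sum (L := SummationFilter.unconditional _)
    (f := Set.indicator {l : List (Cfg N) | IsPathBetween N h σ η l} (pathWeight N h))
    (s := pathFinset N h hN hh0 hh1 σ η)
    (fun l hl => Set.indicator_of_notMem
      (s := {l : List (Cfg N) | IsPathBetween N h σ η l}) (f := pathWeight N h)
      (fun hm => hl ((mem_pathFinset N h hN hh0 hh1).mpr hm)))
  rw [h2]
  exact Finset.sum_congr rfl fun l hl =>
    Set.indicator_of_mem (s := {l : List (Cfg N) | IsPathBetween N h σ η l})
      ((mem_pathFinset N h hN hh0 hh1).mp hl) (pathWeight N h)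

lemma pathFinset_self (hN : 3 ≤ N) (hh0 : 0 < h) (hh1 : h < 1) {η : Cfg N}
    (hrob : robust N h η) : pathFinset N h hN hh0 hh1 η η = {[η]} := by
  ext l
  rw [mem_pathFinset N h hN hh0 hh1, Finset.mem_singleton]
  constructor
  · rintro ⟨hhead, hlast, hchain⟩
    match l with
    | [] => simp at hhead
    | [a] =>
      simp only [List.head?] at hhead
      injection hhead with hh'
      rw [hh']
    | a :: b :: t =>
      simp only [List.head?] at hhead
      injection hhead with hh'
      subst hh'
      rw [List.Chain', List.isChain_cons] at hchain
      have hstep : stepRel N h a b := hchain.1 b rfl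
      obtain ⟨⟨i, rfl⟩, hle⟩ := hstep
      exact absurd hle (hrob i)
  · rintro rfl
    exact ⟨rfl, rfl, List.isChain_singleton _⟩

lemma pathFinset_robust_ne (hN : 3 ≤ N) (hh0 : 0 < h) (hh1 : h < 1) {σ η : Cfg N}
    (hrob : robust N h σ) (hne : σ ≠ η) : pathFinset N h hN hh0 hh1 σ η = ∅ := by
  ext l
  simp only [Finset.notMem_empty, iff_false]
  rw [mem_pathFinset N h hN hh0 hh1]
  rintro ⟨hhead, hlast, hchain⟩
  match l with
  | [] => simp at hhead
  | [a] =>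
    simp only [List.head?] at hhead
    injection hhead with hh'
    subst hh'
    simp only [List.getLast?] at hlast
    injection hlast with hl'
    exact hne hl'
  | a :: b :: t =>
    simp only [List.head?] at hhead
    injection hhead with hh'
    subst hh'
    rw [List.Chain', List.isChain_cons] at hchain
    have hstep : stepRel N h a b := hchain.1 b rfl
    obtain ⟨⟨i, rfl⟩, hle⟩ := hstep
    exact absurd hle (hrob i)

lemma pathFinset_biUnion (hN : 3 ≤ N) (hh0 : 0 < h) (hh1 : h < 1) {σ η : Cfg N}
    (hne : σ ≠ η) :
    pathFinset N h hN hh0 hh1 σ η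
      = (deltaSet N h σ).biUnion
          (fun i => (pathFinset N h hN hh0 hh1 (flip N σ i) η).image (List.cons σ)) := by
  ext l
  rw [mem_pathFinset N h hN hh0 hh1, Finset.mem_biUnion]
  constructor
  · rintro ⟨hhead, hlast, hchain⟩
    match l with
    | [] => simp at hhead
    | [a] =>
      simp only [List.head?] at hhead
      injection hhead with hh'
      subst hh'
      simp only [List.getLast?] at hlast
      injection hlast with hl'
      exact absurd hl' hne
    | a :: b :: t =>
      simp only [List.head?] at hhead
      injection hhead with hh'
      subst hh'
      rw [List.Chain', List.isChain_cons] at hchain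
      have hstep : stepRel N h a b := hchain.1 b rfl
      obtain ⟨⟨i, hib⟩, hle⟩ := hstep
      refine ⟨i, ?_, ?_⟩
      · rw [hib] at hle
        exact Finset.mem_filter.mpr ⟨Finset.mem_univ i, hle⟩
      · rw [Finset.mem_image]
        refine ⟨b :: t, ?_, rfl⟩
        rw [mem_pathFinset N h hN hh0 hh1]
        refine ⟨by simp [hib], ?_, hchain.2⟩
        rw [← hlast, List.getLast?_cons_cons]
  · rintro ⟨i, hi, hl⟩
    rw [Finset.mem_image] at hl
    obtain ⟨l', hl', rfl⟩ := hl
    rw [mem_pathFinset N h hN hh0 hh1] at hl'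
    obtain ⟨hhead, hlast, hchain⟩ := hl'
    have hsus : susceptible N h σ i := (Finset.mem_filter.mp hi).2
    refine ⟨rfl, ?_, ?_⟩
    · match l' with
      | [] => simp at hhead
      | b :: t => rw [List.getLast?_cons_cons, hlast]
    · rw [List.Chain', List.isChain_cons]
      refine ⟨?_, hchain⟩
      intro y hy
      match l' with
      | [] => simp at hhead
      | b :: t =>
        simp only [List.head?] at hhead hy
        injection hhead with hh'
        injection hy with hy'
        subst hh'
        rw [← hy']
        exact ⟨⟨i, rfl⟩, hsus⟩

lemma pathWeight_cons (σ τ : Cfg N) (l : List (Cfg N)) (hl : l ≠ []) :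
    pathWeight N h (σ :: l) = ((deltaSet N h σ).card : ℝ)⁻¹ * pathWeight N h l := by
  unfold pathWeight
  rw [List.dropLast_cons_of_ne_nil hl, List.map_cons, List.prod_cons]

end Paths



lemma sum_ptilde_mul (h : ℝ) (σ : Cfg N) (g : Cfg N → ℝ) :
    ∑ τ : Cfg N, Pmat N h σ τ * g τ
      = (1 - ((deltaSet N h σ).card : ℝ)/(N:ℝ)^2) * g σ
        + ∑ i ∈ deltaSet N h σ, (1/(N:ℝ)^2) * g (flip N σ i) := by
  classical
  rw [← Finset.add_sum_erase Finset.univ _ (Finset.mem_univ σ)]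
  congr 1
  · show ptilde N h σ σ * g σ = _
    rw [ptilde_self]
  · have himg : (deltaSet N h σ).image (flip N σ) ⊆ Finset.univ.erase σ := by
      intro τ hτ
      obtain ⟨i, _, rfl⟩ := Finset.mem_image.mp hτ
      exact Finset.mem_erase.mpr ⟨flip_ne N σ i, Finset.mem_univ _⟩
    have hrest : ∑ τ ∈ Finset.univ.erase σ, Pmat N h σ τ * g τ
        = ∑ τ ∈ (deltaSet N h σ).image (flip N σ), Pmat N h σ τ * g τ := by
      refine (Finset.sum_subset himg ?_).symm
      intro τ hτ hnm
      have hne : τ ≠ σ := (Finset.mem_erase.mp hτ).1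
      have : Pmat N h σ τ = 0 := by
        by_cases hf : ∃ i, flip N σ i = τ
        · obtain ⟨i, rfl⟩ := hf
          show ptilde N h σ (flip N σ i) = 0
          rw [ptilde_flip, if_neg]
          intro hsus
          exact hnm (Finset.mem_image.mpr ⟨i, by simp [deltaSet, hsus], rfl⟩)
        · push_neg at hf
          exact ptilde_other N h hne hf
      rw [this, zero_mul]
    rw [hrest, Finset.sum_image (fun x _ y _ hc => flip_right_inj N σ hc)]
    refine Finset.sum_congr rfl fun i hi => ?_
    have : Pmat N h σ (flip N σ i) = 1/(N:ℝ)^2 := by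
      show ptilde N h σ (flip N σ i) = 1/(N:ℝ)^2
      rw [ptilde_flip, if_pos (Finset.mem_filter.mp hi).2]
    rw [this]

lemma path_ne_nil {h : ℝ} {σ η : Cfg N} {l : List (Cfg N)}
    (hl : IsPathBetween N h σ η l) : l ≠ [] := by
  intro hc
  subst hc
  simp [IsPathBetween] at hl


/-- the limit `p̂(σ,η) = lim_κ p̃^κ(σ,η)` exists for robust `η`, and
whenever `η` is a downhill configuration of `σ` different from `σ`, it equals the
sum over all downhill paths from `σ` to `η` of their weights. -/
theorem phat_exists_and_path_sum (N : ℕ) [NeZero N] (hN : 3 ≤ N)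
    (h : ℝ) (hh0 : 0 < h) (hh1 : h < 1)
    (σ η : Cfg N) (hη : robust N h η) :
    (∃ L : ℝ, Tendsto (fun κ : ℕ => (Pmat N h ^ κ) σ η) atTop (𝓝 L)) ∧
    ((η = σ ∨ ∃ l : List (Cfg N), IsPathBetween N h σ η l) → η ≠ σ →
      Tendsto (fun κ : ℕ => (Pmat N h ^ κ) σ η) atTop
        (𝓝 (∑' l : {l : List (Cfg N) // IsPathBetween N h σ η l},
              pathWeight N h l.1))) := by
  classical
  have hmono : ∀ σ' : Cfg N, Monotone (fun κ : ℕ => (Pmat N h ^ κ) σ' η) :=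
    fun σ' => pow_mono N h hη σ'
  have hbdd : ∀ σ' : Cfg N, BddAbove (Set.range fun κ : ℕ => (Pmat N h ^ κ) σ' η) := by
    intro σ'
    refine ⟨1, ?_⟩
    rintro x ⟨κ, rfl⟩
    exact pow_entry_le_one N h κ σ' η
  obtain ⟨L, hLdef⟩ : ∃ L : Cfg N → ℝ, L = fun σ' => ⨆ κ : ℕ, (Pmat N h ^ κ) σ' η := ⟨_, rfl⟩
  have htend : ∀ σ' : Cfg N, Tendsto (fun κ : ℕ => (Pmat N h ^ κ) σ' η) atTop (𝓝 (L σ')) := by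
    intro σ'
    rw [hLdef]
    exact tendsto_atTop_ciSup (hmono σ') (hbdd σ')
  obtain ⟨W, hWdef⟩ : ∃ W : Cfg N → ℝ,
      W = fun σ' => ∑ l ∈ pathFinset N h hN hh0 hh1 σ' η, pathWeight N h l := ⟨_, rfl⟩
  have hNp := Npow_pos N
  -- the recursion satisfied by L
  have hLrec : ∀ σ' : Cfg N, L σ' = ∑ τ : Cfg N, Pmat N h σ' τ * L τ := by
    intro σ'
    have t1 := (htend σ').comp (tendsto_add_atTop_nat 1)
    simp only [Function.comp_def] at t1
    have heq : ∀ κ : ℕ, (Pmat N h ^ (κ+1)) σ' η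
        = ∑ τ : Cfg N, Pmat N h σ' τ * (Pmat N h ^ κ) τ η := by
      intro κ; rw [pow_succ', Matrix.mul_apply]
    have t1' : Tendsto (fun κ : ℕ => ∑ τ : Cfg N, Pmat N h σ' τ * (Pmat N h ^ κ) τ η)
        atTop (𝓝 (L σ')) := t1.congr heq
    have t2 : Tendsto (fun κ : ℕ => ∑ τ : Cfg N, Pmat N h σ' τ * (Pmat N h ^ κ) τ η)
        atTop (𝓝 (∑ τ : Cfg N, Pmat N h σ' τ * L τ)) :=
      tendsto_finset_sum _ (fun τ _ => (htend τ).const_mul _)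
    exact tendsto_nhds_unique t1' t2
  -- L = W by strong induction on the number of strictly lower energy levels
  have hLW : ∀ σ' : Cfg N, L σ' = W σ' := by
    have main : ∀ n : ℕ, ∀ σ' : Cfg N,
        (Finset.univ.filter (fun τ' : Cfg N => H N h τ' < H N h σ')).card = n →
        L σ' = W σ' := by
      intro n
      induction n using Nat.strong_induction_on with
      | _ n ih =>
        intro σ' hn
        by_cases hσε : σ' = η
        · rw [hσε]
          have hone : ∀ κ : ℕ, (Pmat N h ^ κ) η η = 1 := fun κ => by
            rw [pow_robust_row N h hη κ η, if_pos rfl]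
          have hLη : L η = 1 := by
            rw [hLdef]
            simp only [hone]
            exact ciSup_const
          have hWη : W η = 1 := by
            rw [hWdef]
            simp only []
            rw [pathFinset_self N h hN hh0 hh1 hη, Finset.sum_singleton]
            simp [pathWeight]
          rw [hLη, hWη]
        · by_cases hrob : robust N h σ'
          · have hzero : ∀ κ : ℕ, (Pmat N h ^ κ) σ' η = 0 := fun κ => by
              rw [pow_robust_row N h hrob κ η, if_neg (fun hc => hσε hc.symm)]
            have hL0 : L σ' = 0 := by
              rw [hLdef]
              simp only [hzero]
              exact ciSup_const
            have hW0 : W σ' = 0 := by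
              rw [hWdef]
              simp only []
              rw [pathFinset_robust_ne N h hN hh0 hh1 hrob hσε, Finset.sum_empty]
            rw [hL0, hW0]
          · -- transient configuration
            have hex : ∃ i : V N, susceptible N h σ' i := by
              simp only [robust, not_forall, not_not] at hrob
              exact hrob
            obtain ⟨i₀, hi₀⟩ := hex
            have hdpos : 0 < ((deltaSet N h σ').card : ℝ) := by
              have : 0 < (deltaSet N h σ').card :=
                Finset.card_pos.mpr ⟨i₀, Finset.mem_filter.mpr ⟨Finset.mem_univ _, hi₀⟩⟩
              exact_mod_cast this
            -- induction hypothesis applies to all flips of susceptible spins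
            have hIH : ∀ i ∈ deltaSet N h σ', L (flip N σ' i) = W (flip N σ' i) := by
              intro i hi
              have hlt : H N h (flip N σ' i) < H N h σ' :=
                susceptible_lt N h hN hh0 hh1 (Finset.mem_filter.mp hi).2
              have hsub : (Finset.univ.filter
                    (fun τ' : Cfg N => H N h τ' < H N h (flip N σ' i))).card
                  < (Finset.univ.filter (fun τ' : Cfg N => H N h τ' < H N h σ')).card := by
                apply Finset.card_lt_card
                rw [Finset.ssubset_iff_of_subset]
                · exact ⟨flip N σ' i, Finset.mem_filter.mpr ⟨Finset.mem_univ _, hlt⟩,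
                    fun hc => absurd (Finset.mem_filter.mp hc).2 (lt_irrefl _)⟩
                · intro ρ hρ
                  exact Finset.mem_filter.mpr
                    ⟨Finset.mem_univ _, lt_trans (Finset.mem_filter.mp hρ).2 hlt⟩
              exact ih _ (hn ▸ hsub) _ rfl
            -- disjointness for the path decomposition
            have hdisj : (↑(deltaSet N h σ') : Set (V N)).PairwiseDisjoint
                (fun i => (pathFinset N h hN hh0 hh1 (flip N σ' i) η).image
                  (List.cons σ')) := by
              intro i hi j hj hij
              simp only [Function.onFun]
              rw [Finset.disjoint_left]
              intro l hl1 hl2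
              obtain ⟨l1, hl1', hl1e⟩ := Finset.mem_image.mp hl1
              obtain ⟨l2, hl2', hl2e⟩ := Finset.mem_image.mp hl2
              have hl12 : l1 = l2 := List.cons_injective (hl1e.trans hl2e.symm)
              have hq1 := ((mem_pathFinset N h hN hh0 hh1).mp hl1').1
              have hq2 := ((mem_pathFinset N h hN hh0 hh1).mp hl2').1
              rw [hl12, hq2] at hq1
              injection hq1 with hq1'
              exact hij (flip_right_inj N σ' hq1'.symm)
            -- the recursion satisfied by W
            have hWrec : W σ' = ∑ i ∈ deltaSet N h σ',
                ((deltaSet N h σ').card : ℝ)⁻¹ * W (flip N σ' i) := by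
              rw [hWdef]
              simp only []
              rw [pathFinset_biUnion N h hN hh0 hh1 hσε, Finset.sum_biUnion hdisj]
              refine Finset.sum_congr rfl fun i hi => ?_
              rw [Finset.sum_image (fun x _ y _ hc => List.cons_injective hc),
                Finset.mul_sum]
              refine Finset.sum_congr rfl fun l' hl' => ?_
              have hne' : l' ≠ [] := path_ne_nil N ((mem_pathFinset N h hN hh0 hh1).mp hl')
              exact pathWeight_cons N h σ' η l' hne'
            -- combine the recursions
            have h1 := hLrec σ'
            rw [sum_ptilde_mul N h σ' L] at h1
            have h1' : L σ' = (1 - ((deltaSet N h σ').card : ℝ)/(N:ℝ)^2) * L σ'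
                + ∑ i ∈ deltaSet N h σ', (1/(N:ℝ)^2) * W (flip N σ' i) := by
              refine h1.trans ?_
              congr 1
              exact Finset.sum_congr rfl fun i hi => by rw [hIH i hi]
            have hsum : ∑ i ∈ deltaSet N h σ', (1/(N:ℝ)^2) * W (flip N σ' i)
                = (1/(N:ℝ)^2) * ∑ i ∈ deltaSet N h σ', W (flip N σ' i) := by
              rw [Finset.mul_sum]
            have hsum2 : ∑ i ∈ deltaSet N h σ',
                  ((deltaSet N h σ').card : ℝ)⁻¹ * W (flip N σ' i)
                = ((deltaSet N h σ').card : ℝ)⁻¹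
                  * ∑ i ∈ deltaSet N h σ', W (flip N σ' i) := by
              rw [Finset.mul_sum]
            rw [hsum] at h1'
            rw [hsum2] at hWrec
            set d : ℝ := ((deltaSet N h σ').card : ℝ) with hd
            set S : ℝ := ∑ i ∈ deltaSet N h σ', W (flip N σ' i) with hS
            have hdne : d ≠ 0 := ne_of_gt hdpos
            have hn2ne : ((N:ℝ)^2) ≠ 0 := ne_of_gt hNp
            have hkey : d * L σ' = S := by
              have h2 : d/(N:ℝ)^2 * L σ' = 1/(N:ℝ)^2 * S := by linarith
              field_simp at h2
              linarith
            rw [hWrec]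
            rw [← hkey]
            field_simp
    exact fun σ' => main _ σ' rfl
  constructor
  · exact ⟨L σ, htend σ⟩
  · intro _ _
    rw [Wsum_eq N h hN hh0 hh1 σ η]
    have hws : (∑ l ∈ pathFinset N h hN hh0 hh1 σ η, pathWeight N h l) = W σ := by
      rw [hWdef]
    rw [hws, ← hLW σ]
    exact htend σ

end IsingS
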